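/- Let f_i : ℝᵈ → ℝ, i = 1, …, k, be proper closed convex functions with affine support sets S_{f_i}, and let λ_i ≥ 0. Then cl(λ₁ S_{f₁} + ⋯ + λ_k S_{f_k}) (the closure of the Minkowski sum of scaled sets) is an affine support set of the function f = λ₁ f₁ + ⋯ + λ_k f_k. -/

import Mathlib

open Pointwise

section Helpers

variable {β : Type*}

/-- From an EReal biSup representation, extract nonemptiness and IsLUB. -/
lemma ereal_sup_to_isLUB {A : Set β} {g : β → ℝ} {a : ℝ}
    (h : (a : EReal) = ⨆ p ∈ A, ((g p : ℝ) : EReal)) : A.Nonempty ∧ IsLUB (g '' A) a := by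
  have hne : A.Nonempty := by
    by_contra hA
    rw [Set.not_nonempty_iff_eq_empty] at hA
    simp [hA] at h
  refine ⟨hne, ⟨?_, ?_⟩⟩
  · rintro y ⟨p, hp, rfl⟩
    have : ((g p : ℝ) : EReal) ≤ (a : EReal) := h ▸ le_iSup₂ (f := fun p _ => ((g p : ℝ) : EReal)) p hp
    exact_mod_cast this
  · intro c hc
    have : (a : EReal) ≤ (c : EReal) := by
      rw [h]
      exact iSup₂_le fun p hp => EReal.coe_le_coe_iff.2 (hc ⟨p, hp, rfl⟩)
    exact_mod_cast this

lemma isLUB_to_ereal_sup {A : Set β} {g : β → ℝ} {a : ℝ}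
    (hne : A.Nonempty) (h : IsLUB (g '' A) a) :
    (a : EReal) = ⨆ p ∈ A, ((g p : ℝ) : EReal) := by
  obtain ⟨p₀, hp₀⟩ := hne
  have hub : (⨆ p ∈ A, ((g p : ℝ) : EReal)) ≤ (a : EReal) :=
    iSup₂_le fun p hp => EReal.coe_le_coe_iff.2 (h.1 ⟨p, hp, rfl⟩)
  refine le_antisymm ?_ hub
  set s : EReal := ⨆ p ∈ A, ((g p : ℝ) : EReal) with hs
  have hlb : ((g p₀ : ℝ) : EReal) ≤ s := le_iSup₂ (f := fun p _ => ((g p : ℝ) : EReal)) p₀ hp₀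
  have hsne_top : s ≠ ⊤ := fun ht => by simp [ht] at hub
  have hsne_bot : s ≠ ⊥ := fun hb => by simp [hb] at hlb
  have hco : ((s.toReal : ℝ) : EReal) = s := EReal.coe_toReal hsne_top hsne_bot
  rw [← hco, EReal.coe_le_coe_iff]
  refine h.2 ?_
  rintro y ⟨p, hp, rfl⟩
  have : ((g p : ℝ) : EReal) ≤ s := le_iSup₂ (f := fun p _ => ((g p : ℝ) : EReal)) p hp
  rw [← hco] at this
  exact_mod_cast this

lemma isLUB_add' {s t : Set ℝ} {a b : ℝ} (hs : IsLUB s a) (ht : IsLUB t b) :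
    IsLUB (s + t) (a + b) := by
  constructor
  · rintro y ⟨u, hu, v, hv, rfl⟩
    exact add_le_add (hs.1 hu) (ht.1 hv)
  · intro c hc
    have h1 : ∀ u ∈ s, u ≤ c - b := by
      intro u hu
      have : b ≤ c - u := ht.2 fun v hv => le_sub_iff_add_le'.2 (hc ⟨u, hu, v, hv, rfl⟩)
      linarith
    have : a ≤ c - b := hs.2 h1
    linarith

end Helpers

section SupClosure

variable {E : Type*} [TopologicalSpace E]

lemma ereal_sup_closure {A : Set E} {g : E → ℝ} (hg : Continuous g) :
    (⨆ p ∈ closure A, ((g p : ℝ) : EReal)) = ⨆ p ∈ A, ((g p : ℝ) : EReal) := by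
  refine le_antisymm ?_ (iSup₂_le fun p hp => le_iSup₂ (f := fun p _ => ((g p : ℝ) : EReal)) p (subset_closure hp))
  refine iSup₂_le fun p hp => ?_
  have hne : (nhdsWithin p A).NeBot := mem_closure_iff_nhdsWithin_neBot.mp hp
  have htd : Filter.Tendsto (fun q => ((g q : ℝ) : EReal)) (nhdsWithin p A) (nhds ((g p : ℝ) : EReal)) :=
    (continuous_coe_real_ereal.tendsto _).comp (hg.continuousWithinAt)
  refine le_of_tendsto htd ?_
  exact eventually_mem_nhdsWithin.mono fun q hq => le_iSup₂ (f := fun r _ => ((g r : ℝ) : EReal)) q hq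

end SupClosure

theorem affine_support_of_linear_combination
    {d : ℕ} (k : ℕ) (f : Fin k → EuclideanSpace ℝ (Fin d) → ℝ)
    (S : Fin k → Set (ℝ × EuclideanSpace ℝ (Fin d)))
    (hconv : ∀ i, ConvexOn ℝ Set.univ (f i))
    (hlsc : ∀ i, LowerSemicontinuous (f i))
    (hSclosed : ∀ i, IsClosed (S i)) (hSconv : ∀ i, Convex ℝ (S i))
    (hrep : ∀ i x, ((f i x : ℝ) : EReal) = ⨆ p ∈ S i, ((p.1 + inner ℝ p.2 x : ℝ) : EReal))
    (l : Fin k → ℝ) (hl : ∀ i, 0 ≤ l i) :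
    IsClosed (closure (∑ i : Fin k, l i • S i))
      ∧ Convex ℝ (closure (∑ i : Fin k, l i • S i))
      ∧ ∀ x, (((∑ i : Fin k, l i * f i x : ℝ)) : EReal)
          = ⨆ p ∈ closure (∑ i : Fin k, l i • S i), ((p.1 + inner ℝ p.2 x : ℝ) : EReal) := by
  have hSne : ∀ i, (S i).Nonempty := fun i => (ereal_sup_to_isLUB (hrep i 0)).1
  -- convexity of finite sums of sets
  have hconvsum : ∀ s : Finset (Fin k), Convex ℝ (∑ i ∈ s, l i • S i) := by
    intro s
    induction s using Finset.cons_induction with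
    | empty => simpa [← Set.singleton_zero] using convex_singleton (0 : ℝ × EuclideanSpace ℝ (Fin d))
    | cons a s ha ih =>
        rw [Finset.sum_cons]
        exact Convex.add ((hSconv a).smul _) ih
  refine ⟨isClosed_closure, (hconvsum Finset.univ).closure, fun x => ?_⟩
  set g : ℝ × EuclideanSpace ℝ (Fin d) → ℝ := fun p => p.1 + inner ℝ p.2 x with hg
  have hgadd : ∀ p q, g (p + q) = g p + g q := by
    intro p q
    simp only [hg, Prod.fst_add, Prod.snd_add, inner_add_left]
    ring
  have hgzero : g 0 = 0 := by simp [hg]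
  have hgcont : Continuous g := continuous_fst.add ((continuous_snd.inner continuous_const))
  have himg : ∀ A B : Set (ℝ × EuclideanSpace ℝ (Fin d)), g '' (A + B) = g '' A + g '' B := by
    intro A B
    ext y
    constructor
    · rintro ⟨p, ⟨u, hu, v, hv, rfl⟩, rfl⟩
      exact ⟨g u, ⟨u, hu, rfl⟩, g v, ⟨v, hv, rfl⟩, (hgadd u v).symm⟩
    · rintro ⟨_, ⟨u, hu, rfl⟩, _, ⟨v, hv, rfl⟩, rfl⟩
      exact ⟨u + v, ⟨u, hu, v, hv, rfl⟩, hgadd u v⟩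
  have hlub : ∀ i, IsLUB (g '' S i) (f i x) := fun i => (ereal_sup_to_isLUB (hrep i x)).2
  -- scaled sets
  have hscaled : ∀ i, IsLUB (g '' (l i • S i)) (l i * f i x) := by
    intro i
    rcases eq_or_lt_of_le (hl i) with h0 | hpos
    · have : l i • S i = {0} := by
        rw [← h0, Set.zero_smul_set (hSne i)]; rfl
      rw [this, ← h0]
      simpa [hgzero] using isLUB_singleton (a := (0:ℝ))
    · constructor
      · rintro y ⟨p, ⟨q, hq, rfl⟩, rfl⟩
        have : g (l i • q) = l i * g q := by
          simp only [hg, Prod.smul_fst, Prod.smul_snd, real_inner_smul_left, smul_eq_mul]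
          ring
        rw [this]
        exact mul_le_mul_of_nonneg_left ((hlub i).1 ⟨q, hq, rfl⟩) (hl i)
      · intro c hc
        have hub : ∀ y ∈ g '' S i, y ≤ c / l i := by
          rintro y ⟨q, hq, rfl⟩
          have hcq : l i * g q ≤ c := by
            refine hc ⟨l i • q, ⟨q, hq, rfl⟩, ?_⟩
            simp only [hg, Prod.smul_fst, Prod.smul_snd, real_inner_smul_left, smul_eq_mul]
            ring
          rw [le_div_iff₀ hpos, mul_comm]
          exact hcq
        have := (hlub i).2 hub
        rw [le_div_iff₀ hpos, mul_comm] at this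
        exact this
  have hsmulne : ∀ i, (l i • S i).Nonempty := fun i => (hSne i).smul_set
  -- key induction
  have key : ∀ s : Finset (Fin k), (∑ i ∈ s, l i • S i).Nonempty ∧
      IsLUB (g '' (∑ i ∈ s, l i • S i)) (∑ i ∈ s, l i * f i x) := by
    intro s
    induction s using Finset.cons_induction with
    | empty =>
        refine ⟨⟨0, by simp [← Set.singleton_zero]⟩, ?_⟩
        have : (∑ i ∈ (∅ : Finset (Fin k)), l i • S i) = {0} := by simp [← Set.singleton_zero]
        rw [this]
        simpa [hgzero] using isLUB_singleton (a := (0:ℝ))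
    | cons a s ha ih =>
        rw [Finset.sum_cons, Finset.sum_cons]
        refine ⟨(hsmulne a).add ih.1, ?_⟩
        rw [himg]
        exact isLUB_add' (hscaled a) ih.2
  have hmain : ((∑ i : Fin k, l i * f i x : ℝ) : EReal)
      = ⨆ p ∈ (∑ i : Fin k, l i • S i), ((g p : ℝ) : EReal) :=
    isLUB_to_ereal_sup (key Finset.univ).1 (key Finset.univ).2
  rw [show (⨆ p ∈ closure (∑ i : Fin k, l i • S i), ((p.1 + inner ℝ p.2 x : ℝ) : EReal))
      = ⨆ p ∈ closure (∑ i : Fin k, l i • S i), ((g p : ℝ) : EReal) from rfl,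
    ereal_sup_closure hgcont]
  exact hmain
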